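/- Let F : ℝᴺ → ℝ be differentiable with β-Lipschitz gradient, satisfying a global Łojasiewicz inequality ‖∇F(x)‖² ≥ 2μ(F(x) − F_min) for some μ > 0, and let x_{k+1} = x_k − α∇F(x_k) with 0 < α ≤ 1/β. Then F(x_k) − F_min ≤ (1 − αμ)^k (F(x_0) − F_min) for all k, so the function values converge linearly to F_min. -/

import Mathlib

open scoped RealInnerProductSpace

lemma descent_aux {N : ℕ} (F : EuclideanSpace ℝ (Fin N) → ℝ) (β : ℝ)
    (hβ : 0 < β) (hdiff : Differentiable ℝ F)
    (hlip : ∀ x y, ‖gradient F x - gradient F y‖ ≤ β * ‖x - y‖)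
    (x v : EuclideanSpace ℝ (Fin N)) :
    F (x + v) ≤ F x + ⟪gradient F x, v⟫ + β / 2 * ‖v‖ ^ 2 := by
  set g := gradient F x with hg
  set φ : ℝ → ℝ := fun t => F (x + t • v) - t * ⟪g, v⟫ - β / 2 * t ^ 2 * ‖v‖ ^ 2 with hφ
  have hderiv : ∀ t : ℝ, HasDerivAt φ
      (⟪gradient F (x + t • v), v⟫ - ⟪g, v⟫ - β * t * ‖v‖ ^ 2) t := by
    intro t
    have hline : HasDerivAt (fun t : ℝ => x + t • v) v t := by
      simpa using ((hasDerivAt_id t).smul_const v).const_add x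
    have hF : HasDerivAt (fun t : ℝ => F (x + t • v)) ⟪gradient F (x + t • v), v⟫ t := by
      have := ((hdiff (x + t • v)).hasGradientAt.hasFDerivAt).comp_hasDerivAt t hline
      exact this.congr_deriv (by simp)
    have h2 : HasDerivAt (fun t : ℝ => t * ⟪g, v⟫) ⟪g, v⟫ t := by
      simpa using (hasDerivAt_id t).mul_const ⟪g, v⟫
    have h3 : HasDerivAt (fun t : ℝ => β / 2 * t ^ 2 * ‖v‖ ^ 2) (β * t * ‖v‖ ^ 2) t := by
      have := ((hasDerivAt_pow 2 t).const_mul (β / 2)).mul_const (‖v‖ ^ 2)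
      exact this.congr_deriv (by rw [show (2:ℕ) - 1 = 1 from rfl, pow_one]; push_cast; ring)
    exact (hF.sub h2).sub h3
  have hmono : AntitoneOn φ (Set.Icc (0:ℝ) 1) := by
    apply antitoneOn_of_deriv_nonpos (convex_Icc 0 1)
    · exact fun t _ => ((hderiv t).continuousAt).continuousWithinAt
    · exact fun t _ => ((hderiv t).differentiableAt).differentiableWithinAt
    · intro t ht
      rw [(hderiv t).deriv]
      have ht' : 0 < t := (Set.mem_Ioo.mp (by simpa using ht)).1
      have h1 : ⟪gradient F (x + t • v) - g, v⟫ ≤ ‖gradient F (x + t • v) - g‖ * ‖v‖ :=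
        real_inner_le_norm _ _
      have h2 : ‖gradient F (x + t • v) - g‖ ≤ β * (t * ‖v‖) := by
        have := hlip (x + t • v) x
        simpa [norm_smul, abs_of_pos ht'] using this
      have hv : (0:ℝ) ≤ ‖v‖ := norm_nonneg _
      have h3 : ⟪gradient F (x + t • v) - g, v⟫ ≤ β * t * ‖v‖ ^ 2 := by
        calc ⟪gradient F (x + t • v) - g, v⟫ ≤ ‖gradient F (x + t • v) - g‖ * ‖v‖ := h1
          _ ≤ β * (t * ‖v‖) * ‖v‖ := by nlinarith [norm_nonneg (gradient F (x + t • v) - g)]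
          _ = β * t * ‖v‖ ^ 2 := by ring
      have := inner_sub_left (𝕜 := ℝ) (gradient F (x + t • v)) g v
      rw [this] at h3
      linarith
  have := hmono (Set.left_mem_Icc.mpr zero_le_one) (Set.right_mem_Icc.mpr zero_le_one) zero_le_one
  simp only [hφ, one_smul, zero_smul, add_zero, one_mul, zero_mul, one_pow, sub_zero,
    mul_zero] at this
  linarith [this]

theorem stmt18 {N : ℕ} (F : EuclideanSpace ℝ (Fin N) → ℝ) (β α μ Fmin : ℝ)
    (hβ : 0 < β) (hμ : 0 < μ) (hα1 : 0 < α) (hα2 : α ≤ 1 / β)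
    (hdiff : Differentiable ℝ F)
    (hlip : ∀ x y, ‖gradient F x - gradient F y‖ ≤ β * ‖x - y‖)
    (hmin : ∀ x, Fmin ≤ F x)
    (hPL : ∀ x, 2 * μ * (F x - Fmin) ≤ ‖gradient F x‖ ^ 2)
    (x : ℕ → EuclideanSpace ℝ (Fin N))
    (hx : ∀ k, x (k + 1) = x k - α • gradient F (x k)) :
    ∀ k, F (x k) - Fmin ≤ (1 - α * μ) ^ k * (F (x 0) - Fmin) := by
  have hαβ : α * β ≤ 1 := by
    rw [div_eq_mul_inv, one_mul] at hα2
    calc α * β ≤ β⁻¹ * β := by nlinarith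
      _ = 1 := inv_mul_cancel₀ hβ.ne'
  -- one step inequality
  have hstep : ∀ y, F (y - α • gradient F y) - Fmin ≤ (1 - α * μ) * (F y - Fmin) := by
    intro y
    set g := gradient F y with hg
    have hd := descent_aux F β hβ hdiff hlip y (-(α • g))
    have hinner : ⟪g, -(α • g)⟫ = -(α * ‖g‖ ^ 2) := by
      rw [inner_neg_right, real_inner_smul_right, real_inner_self_eq_norm_sq]
    rw [hinner] at hd
    have hnorm : ‖-(α • g)‖ ^ 2 = α ^ 2 * ‖g‖ ^ 2 := by
      rw [norm_neg, norm_smul]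
      simp [abs_of_pos hα1, mul_pow]
    rw [hnorm] at hd
    have hdecr : F (y - α • g) ≤ F y - α / 2 * ‖g‖ ^ 2 := by
      have h1 : β / 2 * (α ^ 2 * ‖g‖ ^ 2) ≤ α / 2 * ‖g‖ ^ 2 := by
        nlinarith [sq_nonneg ‖g‖]
      have : y + -(α • g) = y - α • g := by abel
      rw [this] at hd
      linarith
    have hpl := hPL y
    nlinarith
  by_cases hconst : ∀ z, F z = Fmin
  · intro k
    simp [hconst]
  have hone : 0 ≤ 1 - α * μ := by
    push_neg at hconst
    obtain ⟨z, hz⟩ := hconst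
    have hz' : 0 < F z - Fmin := lt_of_le_of_ne (by linarith [hmin z]) fun e => hz (by linarith)
    have := hstep z
    have h0 : 0 ≤ F (z - α • gradient F z) - Fmin := by linarith [hmin (z - α • gradient F z)]
    nlinarith
  intro k
  induction k with
  | zero => simp
  | succ k ih =>
    have h1 : F (x (k+1)) - Fmin ≤ (1 - α * μ) * (F (x k) - Fmin) := by
      rw [hx k]; exact hstep (x k)
    calc F (x (k+1)) - Fmin ≤ (1 - α * μ) * (F (x k) - Fmin) := h1
      _ ≤ (1 - α * μ) * ((1 - α * μ) ^ k * (F (x 0) - Fmin)) := by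
          exact mul_le_mul_of_nonneg_left ih hone
      _ = (1 - α * μ) ^ (k+1) * (F (x 0) - Fmin) := by ring
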